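/- (First-order condition for the capped orthogonal loss.) Let S > 0. Suppose Y, T̆ : Ω → ℝ are random variables and r_o, t_o, t̆_o : E → ℝ are bounded measurable functions with E[Y | X] = r_o(X)·t_o(X) almost surely, E[T̆ | X] = t̆_o(X) almost surely, |r_o(x)| ≤ S and |t̆_o(x)| ≤ 1 for all x ∈ E. Then for every square-integrable measurable r : E → ℝ (with all expectations below finite), | E[ 2·(Y − (T̆ − t̆_o(X))·r_o(X) − r_o(X)·t̆_o(X))·t̆_o(X)·(r(X) − r_o(X)) ] | ≤ 2S·‖t_o − t̆_o‖_{L²}·‖r − r_o‖_{L²}. -/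

import Mathlib

open MeasureTheory

/-- **First-order condition for the capped orthogonal loss.**
With `E[Y | X] = r_o(X) t_o(X)` a.s., `E[T̆ | X] = t̆_o(X)` a.s., `|r_o| ≤ S` and `|t̆_o| ≤ 1`,
the directional derivative of the capped orthogonal loss at the truth is bounded by
`2 S ‖t_o - t̆_o‖_{L²} ‖r - r_o‖_{L²}`, where `‖f‖_{L²} = (E[f(X)²])^{1/2}`. -/
theorem first_order_condition_capped_loss
    {Ω : Type*} [MeasurableSpace Ω] {μ : Measure Ω} [IsProbabilityMeasure μ]
    {E : Type*} [mE : MeasurableSpace E] (X : Ω → E) (hX : Measurable X)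
    (S : ℝ) (hS : 0 < S)
    (Y T' : Ω → ℝ) (hY : Measurable Y) (hT' : Measurable T')
    (hYint : Integrable Y μ) (hT'int : Integrable T' μ)
    (r_o t_o t'_o : E → ℝ)
    (hro : Measurable r_o) (hto : Measurable t_o) (ht'o : Measurable t'_o)
    (hroB : ∀ x, |r_o x| ≤ S) (ht'oB : ∀ x, |t'_o x| ≤ 1)
    (htoB : ∃ C, ∀ x, |t_o x| ≤ C)
    (hYcond : μ[Y | MeasurableSpace.comap X mE] =ᵐ[μ] fun ω => r_o (X ω) * t_o (X ω))
    (hT'cond : μ[T' | MeasurableSpace.comap X mE] =ᵐ[μ] fun ω => t'_o (X ω))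
    (r : E → ℝ) (hr : Measurable r)
    (hr2 : Integrable (fun ω => (r (X ω)) ^ 2) μ)
    (hint : Integrable (fun ω =>
      2 * (Y ω - (T' ω - t'_o (X ω)) * r_o (X ω) - r_o (X ω) * t'_o (X ω)) * t'_o (X ω) *
        (r (X ω) - r_o (X ω))) μ) :
    |∫ ω, 2 * (Y ω - (T' ω - t'_o (X ω)) * r_o (X ω) - r_o (X ω) * t'_o (X ω)) * t'_o (X ω) *
        (r (X ω) - r_o (X ω)) ∂μ|
      ≤ 2 * S * Real.sqrt (∫ ω, (t_o (X ω) - t'_o (X ω)) ^ 2 ∂μ) *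
        Real.sqrt (∫ ω, (r (X ω) - r_o (X ω)) ^ 2 ∂μ) := by
  obtain ⟨C, hC⟩ := htoB
  have hm : MeasurableSpace.comap X mE ≤ _ := hX.comap_le
  have hXm : @Measurable Ω E (MeasurableSpace.comap X mE) mE X := fun s hs => ⟨s, hs, rfl⟩
  haveI : SigmaFinite (μ.trim hm) := by
    have : IsFiniteMeasure (μ.trim hm) := isFiniteMeasure_trim hm
    infer_instance
  -- notation
  set f : Ω → ℝ := fun ω => 2 * t'_o (X ω) * (r (X ω) - r_o (X ω)) with hf_def
  set g : Ω → ℝ := fun ω =>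
    Y ω - (T' ω - t'_o (X ω)) * r_o (X ω) - r_o (X ω) * t'_o (X ω) with hg_def
  -- integrability of bounded measurable compositions
  have hbdd_int : ∀ (φ : E → ℝ), Measurable φ → ∀ (c : ℝ), (∀ x, |φ x| ≤ c) →
      Integrable (fun ω => φ (X ω)) μ := by
    intro φ hφ c hc
    exact Integrable.mono' (integrable_const c) ((hφ.comp hX).aestronglyMeasurable)
      (Filter.Eventually.of_forall fun ω => by simpa using hc (X ω))
  have ht'oX_int : Integrable (fun ω => t'_o (X ω)) μ := hbdd_int t'_o ht'o 1 ht'oB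
  have hroX_int : Integrable (fun ω => r_o (X ω)) μ := hbdd_int r_o hro S hroB
  have hT'sub_int : Integrable (fun ω => T' ω - t'_o (X ω)) μ := hT'int.sub ht'oX_int
  have hA_int : Integrable (fun ω => (T' ω - t'_o (X ω)) * r_o (X ω)) μ := by
    have := hT'sub_int.bdd_mul (c := S)
      ((hro.comp hX).aestronglyMeasurable)
      (Filter.Eventually.of_forall fun ω => by simpa using hroB (X ω))
    simpa [mul_comm] using this
  have hB_int : Integrable (fun ω => r_o (X ω) * t'_o (X ω)) μ := by
    exact ht'oX_int.bdd_mul (c := S) ((hro.comp hX).aestronglyMeasurable)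
      (Filter.Eventually.of_forall fun ω => by simpa using hroB (X ω))
  have hg_int : Integrable g μ := (hYint.sub hA_int).sub hB_int
  -- strong m-measurability
  have hfm : StronglyMeasurable[MeasurableSpace.comap X mE] f := by
    apply Measurable.stronglyMeasurable
    exact ((measurable_const.mul (ht'o.comp hXm)).mul
      ((hr.comp hXm).sub (hro.comp hXm)))
  have hroXm : StronglyMeasurable[MeasurableSpace.comap X mE] (fun ω => r_o (X ω)) :=
    (hro.comp hXm).stronglyMeasurable
  have hBm : StronglyMeasurable[MeasurableSpace.comap X mE] (fun ω => r_o (X ω) * t'_o (X ω)) :=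
    ((hro.comp hXm).mul (ht'o.comp hXm)).stronglyMeasurable
  have ht'oXm : StronglyMeasurable[MeasurableSpace.comap X mE] (fun ω => t'_o (X ω)) :=
    (ht'o.comp hXm).stronglyMeasurable
  -- conditional expectation of g
  have hcondA : μ[(fun ω => (T' ω - t'_o (X ω)) * r_o (X ω)) | MeasurableSpace.comap X mE] =ᵐ[μ] 0 := by
    have h1 : (fun ω => (T' ω - t'_o (X ω)) * r_o (X ω))
        = (fun ω => r_o (X ω)) * (fun ω => T' ω - t'_o (X ω)) := by
      funext ω; simp [mul_comm]
    rw [h1]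
    have h2 := condExp_mul_of_stronglyMeasurable_left (μ := μ) hroXm
      (by rw [← h1]; exact hA_int) hT'sub_int
    refine h2.trans ?_
    have h3 : μ[(fun ω => T' ω - t'_o (X ω)) | MeasurableSpace.comap X mE] =ᵐ[μ] 0 := by
      have h5 : μ[(fun ω => T' ω - t'_o (X ω)) | MeasurableSpace.comap X mE]
          =ᵐ[μ] μ[T' | MeasurableSpace.comap X mE]
            - μ[(fun ω => t'_o (X ω)) | MeasurableSpace.comap X mE] :=
        condExp_sub (m := MeasurableSpace.comap X mE) hT'int ht'oX_int
      have h4 : μ[(fun ω => t'_o (X ω)) | MeasurableSpace.comap X mE] = fun ω => t'_o (X ω) :=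
        condExp_of_stronglyMeasurable hm ht'oXm ht'oX_int
      filter_upwards [h5, hT'cond] with ω h h'
      rw [h, Pi.sub_apply, h', h4, Pi.zero_apply, sub_self]
    filter_upwards [h3] with ω h
    simp [h]
  have hcondB : μ[(fun ω => r_o (X ω) * t'_o (X ω)) | MeasurableSpace.comap X mE]
      = fun ω => r_o (X ω) * t'_o (X ω) :=
    condExp_of_stronglyMeasurable hm hBm hB_int
  have hcondg : μ[g | MeasurableSpace.comap X mE] =ᵐ[μ] fun ω => r_o (X ω) * (t_o (X ω) - t'_o (X ω)) := by
    have h1 : g = (Y - fun ω => (T' ω - t'_o (X ω)) * r_o (X ω))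
        - fun ω => r_o (X ω) * t'_o (X ω) := rfl
    rw [h1]
    have h2 := condExp_sub (m := MeasurableSpace.comap X mE) (hYint.sub hA_int) hB_int
    have h3 := condExp_sub (m := MeasurableSpace.comap X mE) hYint hA_int
    filter_upwards [h2, h3, hYcond, hcondA] with ω e2 e3 eY eA
    rw [e2, Pi.sub_apply, e3, hcondB, Pi.sub_apply, eY, eA]
    simp; ring
  -- rewrite the integral
  have hfg_eq : (fun ω =>
      2 * (Y ω - (T' ω - t'_o (X ω)) * r_o (X ω) - r_o (X ω) * t'_o (X ω)) * t'_o (X ω) *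
        (r (X ω) - r_o (X ω))) = f * g := by
    funext ω; simp only [hf_def, hg_def, Pi.mul_apply]; ring
  have hfg_int : Integrable (f * g) μ := by rw [← hfg_eq]; exact hint
  have key : ∫ ω, 2 * (Y ω - (T' ω - t'_o (X ω)) * r_o (X ω) - r_o (X ω) * t'_o (X ω)) *
        t'_o (X ω) * (r (X ω) - r_o (X ω)) ∂μ
      = ∫ ω, f ω * (r_o (X ω) * (t_o (X ω) - t'_o (X ω))) ∂μ := by
    have h1 : ∫ ω, (f * g) ω ∂μ = ∫ ω, (μ[f * g | MeasurableSpace.comap X mE]) ω ∂μ :=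
      (integral_condExp hm).symm
    have h2 : μ[f * g | MeasurableSpace.comap X mE] =ᵐ[μ] f * μ[g | MeasurableSpace.comap X mE] :=
      condExp_mul_of_stronglyMeasurable_left hfm hfg_int hg_int
    calc ∫ ω, 2 * (Y ω - (T' ω - t'_o (X ω)) * r_o (X ω) - r_o (X ω) * t'_o (X ω)) *
            t'_o (X ω) * (r (X ω) - r_o (X ω)) ∂μ
        = ∫ ω, (f * g) ω ∂μ := by rw [← hfg_eq]
      _ = ∫ ω, (μ[f * g | MeasurableSpace.comap X mE]) ω ∂μ := h1
      _ = ∫ ω, f ω * (r_o (X ω) * (t_o (X ω) - t'_o (X ω))) ∂μ := by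
          apply integral_congr_ae
          filter_upwards [h2, hcondg] with ω e2 eg
          rw [e2, Pi.mul_apply, eg]
    -- end calc
  rw [key]
  -- now the Cauchy–Schwarz bound
  set u : Ω → ℝ := fun ω => t_o (X ω) - t'_o (X ω) with hu_def
  set v : Ω → ℝ := fun ω => r (X ω) - r_o (X ω) with hv_def
  have hu_meas : Measurable u := (hto.comp hX).sub (ht'o.comp hX)
  have hv_meas : Measurable v := (hr.comp hX).sub (hro.comp hX)
  have hu_sq_int : Integrable (fun ω => u ω ^ 2) μ := by
    refine Integrable.mono' (integrable_const ((C + 1) ^ 2))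
      (hu_meas.pow_const 2).aestronglyMeasurable
      (Filter.Eventually.of_forall fun ω => ?_)
    have h1 := hC (X ω); have h2 := ht'oB (X ω)
    have h1' := abs_le.mp h1; have h2' := abs_le.mp h2
    simp only [Real.norm_eq_abs, abs_pow, sq_abs, hu_def]
    nlinarith [h1'.1, h1'.2, h2'.1, h2'.2]
  have hv_sq_int : Integrable (fun ω => v ω ^ 2) μ := by
    refine Integrable.mono' ((hr2.const_mul 2).add (integrable_const (2 * S ^ 2)))
      (hv_meas.pow_const 2).aestronglyMeasurable
      (Filter.Eventually.of_forall fun ω => ?_)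
    have h1 := abs_le.mp (hroB (X ω))
    simp only [Real.norm_eq_abs, abs_pow, sq_abs, hv_def, Pi.add_apply]
    nlinarith [h1.1, h1.2, sq_nonneg (r (X ω) + r_o (X ω))]
  have hu_mem : MemLp u 2 μ :=
    (memLp_two_iff_integrable_sq hu_meas.aestronglyMeasurable).mpr hu_sq_int
  have hv_mem : MemLp v 2 μ :=
    (memLp_two_iff_integrable_sq hv_meas.aestronglyMeasurable).mpr hv_sq_int
  have hpq : Real.HolderConjugate 2 2 := by constructor <;> norm_num
  have hCS : ∫ ω, ‖u ω‖ * ‖v ω‖ ∂μ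
      ≤ (∫ ω, ‖u ω‖ ^ (2 : ℝ) ∂μ) ^ (1 / (2 : ℝ)) * (∫ ω, ‖v ω‖ ^ (2 : ℝ) ∂μ) ^ (1 / (2 : ℝ)) := by
    have h2 : (ENNReal.ofReal (2 : ℝ)) = 2 := by norm_num
    exact integral_mul_norm_le_Lp_mul_Lq hpq (h2 ▸ hu_mem) (h2 ▸ hv_mem)
  have hsq_u : (fun ω => ‖u ω‖ ^ (2 : ℝ)) = fun ω => u ω ^ 2 := by
    funext ω
    rw [show ((2 : ℝ) = ((2 : ℕ) : ℝ)) by norm_num, Real.rpow_natCast]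
    simp [sq_abs]
  have hsq_v : (fun ω => ‖v ω‖ ^ (2 : ℝ)) = fun ω => v ω ^ 2 := by
    funext ω
    rw [show ((2 : ℝ) = ((2 : ℕ) : ℝ)) by norm_num, Real.rpow_natCast]
    simp [sq_abs]
  have hCS' : ∫ ω, ‖u ω‖ * ‖v ω‖ ∂μ
      ≤ Real.sqrt (∫ ω, u ω ^ 2 ∂μ) * Real.sqrt (∫ ω, v ω ^ 2 ∂μ) := by
    rw [Real.sqrt_eq_rpow, Real.sqrt_eq_rpow]
    calc ∫ ω, ‖u ω‖ * ‖v ω‖ ∂μ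
        ≤ (∫ ω, ‖u ω‖ ^ (2 : ℝ) ∂μ) ^ (1 / (2 : ℝ)) *
            (∫ ω, ‖v ω‖ ^ (2 : ℝ) ∂μ) ^ (1 / (2 : ℝ)) := hCS
      _ = (∫ ω, u ω ^ 2 ∂μ) ^ (1 / (2 : ℝ)) * (∫ ω, v ω ^ 2 ∂μ) ^ (1 / (2 : ℝ)) := by
          rw [hsq_u, hsq_v]
  -- pointwise bound on the integrand
  have hptw : ∀ ω, |f ω * (r_o (X ω) * (t_o (X ω) - t'_o (X ω)))|
      ≤ 2 * S * (‖u ω‖ * ‖v ω‖) := by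
    intro ω
    have h1 := ht'oB (X ω)
    have h2 := hroB (X ω)
    simp only [hf_def, hu_def, hv_def, Real.norm_eq_abs]
    have : |2 * t'_o (X ω) * (r (X ω) - r_o (X ω)) * (r_o (X ω) * (t_o (X ω) - t'_o (X ω)))|
        = 2 * |t'_o (X ω)| * |r_o (X ω)| * (|t_o (X ω) - t'_o (X ω)| * |r (X ω) - r_o (X ω)|) := by
      rw [abs_mul, abs_mul, abs_mul, abs_mul]
      simp [abs_two]
      ring
    rw [this]
    have hnn : (0 : ℝ) ≤ |t_o (X ω) - t'_o (X ω)| * |r (X ω) - r_o (X ω)| :=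
      mul_nonneg (abs_nonneg _) (abs_nonneg _)
    have : 2 * |t'_o (X ω)| * |r_o (X ω)| ≤ 2 * S := by
      nlinarith [abs_nonneg (t'_o (X ω)), abs_nonneg (r_o (X ω))]
    exact mul_le_mul_of_nonneg_right this hnn |>.trans (le_of_eq rfl)
  -- integrability of the product integrand and of the dominating function
  have hv_int : Integrable v μ := by
    have := hv_mem.integrable (one_le_two : (1 : ENNReal) ≤ 2)
    exact this
  have huv_int : Integrable (fun ω => ‖u ω‖ * ‖v ω‖) μ := by
    refine (hv_int.norm.bdd_mul (c := C + 1)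
      hu_meas.norm.aestronglyMeasurable (Filter.Eventually.of_forall fun ω => ?_))
    have h1 := abs_le.mp (hC (X ω)); have h2 := abs_le.mp (ht'oB (X ω))
    simp only [Real.norm_eq_abs, abs_abs, hu_def]
    calc |t_o (X ω) - t'_o (X ω)| ≤ |t_o (X ω)| + |t'_o (X ω)| := abs_sub _ _
      _ ≤ C + 1 := add_le_add (hC (X ω)) (ht'oB (X ω))
  have hprod_int : Integrable (fun ω => f ω * (r_o (X ω) * (t_o (X ω) - t'_o (X ω)))) μ := by
    refine Integrable.mono' ((huv_int.const_mul (2 * S))) ?_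
      (Filter.Eventually.of_forall fun ω => ?_)
    · exact (((measurable_const.mul (ht'o.comp hX)).mul hv_meas).mul
        ((hro.comp hX).mul hu_meas)).aestronglyMeasurable
    · simpa only [Real.norm_eq_abs] using hptw ω
  -- assemble
  calc |∫ ω, f ω * (r_o (X ω) * (t_o (X ω) - t'_o (X ω))) ∂μ|
      ≤ ∫ ω, |f ω * (r_o (X ω) * (t_o (X ω) - t'_o (X ω)))| ∂μ := by
        simpa only [Real.norm_eq_abs] using
          norm_integral_le_integral_norm (fun ω => f ω * (r_o (X ω) * (t_o (X ω) - t'_o (X ω))))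
    _ ≤ ∫ ω, 2 * S * (‖u ω‖ * ‖v ω‖) ∂μ := by
        refine integral_mono hprod_int.abs (huv_int.const_mul (2 * S)) fun ω => hptw ω
    _ = 2 * S * ∫ ω, ‖u ω‖ * ‖v ω‖ ∂μ := integral_const_mul _ _
    _ ≤ 2 * S * (Real.sqrt (∫ ω, u ω ^ 2 ∂μ) * Real.sqrt (∫ ω, v ω ^ 2 ∂μ)) := by
        apply mul_le_mul_of_nonneg_left hCS' (by positivity)
    _ = 2 * S * Real.sqrt (∫ ω, (t_o (X ω) - t'_o (X ω)) ^ 2 ∂μ) *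
          Real.sqrt (∫ ω, (r (X ω) - r_o (X ω)) ^ 2 ∂μ) := by
        simp only [hu_def, hv_def]; ring
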